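/- The function w(z) := z + (1/(2e)) Σ_{n≥1} sin(x/n!) e^{−y²/n!²}, z = x+iy, is the pointwise limit of the maps w_N(z) := z + (1/(2e)) Σ_{n=1}^{N} sin(x/n!) e^{−y²/n!²}, each of which differs from the identity by a function that is 2π·N!-periodic in x; the convergence is locally uniform on ℂ but w − id is not a uniform limit on ℂ of functions periodic in x, i.e. w − id is not limit periodic in x. -/

import Mathlib

noncomputable section

open Filter

/-- `m`-th term `sin(x/m!) e^{−y²/m!²}` of the series for `w − id`. -/
def sinTerm (m : ℕ) (z : ℂ) : ℝ :=
  Real.sin (z.re / (Nat.factorial m : ℝ))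
    * Real.exp (-(z.im ^ 2) / ((Nat.factorial m : ℝ)) ^ 2)

/-- Partial map `w_N(z) = z + (1/(2e)) Σ_{n=1}^{N} sin(x/n!) e^{−y²/n!²}`. -/
def wpart (N : ℕ) (z : ℂ) : ℂ :=
  z + (((2 * Real.exp 1)⁻¹ * ∑ k ∈ Finset.range N, sinTerm (k + 1) z : ℝ) : ℂ)

/-- `w(z) = z + (1/(2e)) Σ_{n≥1} sin(x/n!) e^{−y²/n!²}`. -/
def wfun (z : ℂ) : ℂ :=
  z + (((2 * Real.exp 1)⁻¹ * ∑' k : ℕ, sinTerm (k + 1) z : ℝ) : ℂ)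

lemma sinTerm_abs_le (m : ℕ) (z : ℂ) : ‖sinTerm m z‖ ≤ |z.re| / (Nat.factorial m : ℝ) := by
  have hm : (0:ℝ) < (Nat.factorial m : ℝ) := by
    exact_mod_cast Nat.factorial_pos m
  have h1 : |Real.sin (z.re / (Nat.factorial m : ℝ))| ≤ |z.re / (Nat.factorial m : ℝ)| :=
    Real.abs_sin_le_abs
  have h2 : Real.exp (-(z.im ^ 2) / ((Nat.factorial m : ℝ)) ^ 2) ≤ 1 := by
    rw [Real.exp_le_one_iff]
    apply div_nonpos_of_nonpos_of_nonneg
    · exact neg_nonpos.mpr (sq_nonneg _)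
    · exact sq_nonneg _
  have h3 : (0:ℝ) < Real.exp (-(z.im ^ 2) / ((Nat.factorial m : ℝ)) ^ 2) := Real.exp_pos _
  calc ‖sinTerm m z‖
      = |Real.sin (z.re / (Nat.factorial m : ℝ))|
        * Real.exp (-(z.im ^ 2) / ((Nat.factorial m : ℝ)) ^ 2) := by
        rw [sinTerm, Real.norm_eq_abs, abs_mul, abs_of_pos h3]
    _ ≤ |z.re / (Nat.factorial m : ℝ)| * 1 :=
        mul_le_mul h1 h2 h3.le (abs_nonneg _)
    _ = |z.re| / (Nat.factorial m : ℝ) := by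
        rw [mul_one, abs_div, abs_of_pos hm]

lemma summable_aux (C : ℝ) : Summable (fun k : ℕ => C / (Nat.factorial (k + 1) : ℝ)) := by
  have h : Summable (fun n : ℕ => C / (Nat.factorial n : ℝ)) := by
    have := (Real.summable_pow_div_factorial 1).mul_left C
    simpa [div_eq_mul_inv] using this
  exact (summable_nat_add_iff 1).mpr h

lemma summable_sinTerm (z : ℂ) : Summable (fun k : ℕ => sinTerm (k + 1) z) :=
  Summable.of_norm_bounded (summable_aux |z.re|) (fun k => sinTerm_abs_le (k + 1) z)

/-- Each `w_N − id` is `2π·N!`-periodic in `x`, the partial maps `w_N` converge to `w`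
locally uniformly on `ℂ`, but `w − id` is not limit periodic in `x`: it is not a
uniform limit on `ℂ` of functions periodic in `x`. -/
theorem stmt9 :
    (∀ N : ℕ, ∀ z : ℂ,
      wpart N (z + ((2 * Real.pi * (Nat.factorial N : ℝ) : ℝ) : ℂ))
        = wpart N z + ((2 * Real.pi * (Nat.factorial N : ℝ) : ℝ) : ℂ)) ∧
    TendstoLocallyUniformly (fun N => wpart N) wfun atTop ∧
    ¬ (∀ ε : ℝ, 0 < ε → ∃ L : ℕ, 0 < L ∧ ∃ h : ℂ → ℂ,
        (∀ z, h (z + ((2 * Real.pi * (L : ℝ) : ℝ) : ℂ)) = h z) ∧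
        ∀ z, ‖(wfun z - z) - h z‖ ≤ ε) := by
  refine ⟨?_, ?_, ?_⟩
  · -- periodicity of wpart N - id
    intro N z
    have key : ∀ k ∈ Finset.range N,
        sinTerm (k + 1) (z + ((2 * Real.pi * (Nat.factorial N : ℝ) : ℝ) : ℂ))
          = sinTerm (k + 1) z := by
      intro k hk
      have hk' : k + 1 ≤ N := Finset.mem_range.mp hk
      obtain ⟨m, hm⟩ := Nat.factorial_dvd_factorial hk'
      have hfac : (0:ℝ) < (Nat.factorial (k+1) : ℝ) := by
        exact_mod_cast Nat.factorial_pos (k+1)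
      have hre : (z + ((2 * Real.pi * (Nat.factorial N : ℝ) : ℝ) : ℂ)).re
          = z.re + 2 * Real.pi * (Nat.factorial N : ℝ) := by simp
      have him : (z + ((2 * Real.pi * (Nat.factorial N : ℝ) : ℝ) : ℂ)).im = z.im := by simp
      rw [sinTerm, sinTerm, hre, him]
      congr 1
      have harg : (z.re + 2 * Real.pi * (Nat.factorial N : ℝ)) / (Nat.factorial (k+1) : ℝ)
          = z.re / (Nat.factorial (k+1) : ℝ) + (m : ℤ) * (2 * Real.pi) := by
        have : (Nat.factorial N : ℝ) = (Nat.factorial (k+1) : ℝ) * (m : ℝ) := by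
          exact_mod_cast congrArg (fun n : ℕ => (n : ℝ)) hm
        rw [this]
        push_cast
        field_simp
      rw [harg, Real.sin_add_int_mul_two_pi]
    simp only [wpart]
    rw [Finset.sum_congr rfl key]
    ring
  · -- locally uniform convergence
    rw [Metric.tendstoLocallyUniformly_iff]
    intro ε hε x
    refine ⟨Metric.ball x 1, Metric.ball_mem_nhds x one_pos, ?_⟩
    set C : ℝ := ‖x‖ + 1 with hC
    have hbound : ∀ k : ℕ, ∀ y ∈ Metric.ball x 1,
        ‖sinTerm (k + 1) y‖ ≤ C / (Nat.factorial (k + 1) : ℝ) := by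
      intro k y hy
      refine (sinTerm_abs_le (k+1) y).trans ?_
      have hfac : (0:ℝ) < (Nat.factorial (k+1) : ℝ) := by
        exact_mod_cast Nat.factorial_pos (k+1)
      have h1 : |y.re| ≤ ‖y‖ := Complex.abs_re_le_norm y
      have h2 : ‖y‖ ≤ ‖x‖ + 1 := by
        have := mem_ball_iff_norm.mp hy
        calc ‖y‖ = ‖x + (y - x)‖ := by ring_nf
          _ ≤ ‖x‖ + ‖y - x‖ := norm_add_le _ _
          _ ≤ ‖x‖ + 1 := by linarith [this]
      gcongr
      exact h1.trans h2
    have huni := tendstoUniformlyOn_tsum_nat (summable_aux C) hbound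
    rw [Metric.tendstoUniformlyOn_iff] at huni
    have he : (1:ℝ) ≤ 2 * Real.exp 1 := by
      nlinarith [Real.exp_pos 1, Real.add_one_le_exp 1]
    filter_upwards [huni ε hε] with N hN y hy
    have hdd := hN y hy
    have hd : dist (wfun y) (wpart N y)
        = (2 * Real.exp 1)⁻¹ * dist (∑' k : ℕ, sinTerm (k + 1) y)
            (∑ k ∈ Finset.range N, sinTerm (k + 1) y) := by
      rw [wfun, wpart, Complex.dist_eq]
      have : (y + (((2 * Real.exp 1)⁻¹ * ∑' k : ℕ, sinTerm (k + 1) y : ℝ) : ℂ))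
          - (y + (((2 * Real.exp 1)⁻¹ * ∑ k ∈ Finset.range N, sinTerm (k + 1) y : ℝ) : ℂ))
          = ((((2 * Real.exp 1)⁻¹ * ((∑' k : ℕ, sinTerm (k + 1) y)
              - ∑ k ∈ Finset.range N, sinTerm (k + 1) y) : ℝ)) : ℂ) := by
        push_cast
        ring
      rw [this, Complex.norm_real, Real.norm_eq_abs, Real.dist_eq, abs_mul, abs_of_pos]
      positivity
    calc dist (wfun y) (wpart N y)
        = (2 * Real.exp 1)⁻¹ * dist (∑' k : ℕ, sinTerm (k + 1) y)
            (∑ k ∈ Finset.range N, sinTerm (k + 1) y) := hd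
      _ ≤ 1 * dist (∑' k : ℕ, sinTerm (k + 1) y)
            (∑ k ∈ Finset.range N, sinTerm (k + 1) y) := by
          apply mul_le_mul_of_nonneg_right _ dist_nonneg
          rw [inv_le_one_iff₀]; right; exact he
      _ < ε := by rw [one_mul]; exact hdd
  · -- not limit periodic
    intro hcl
    obtain ⟨L, hL, h, hper, hap⟩ := hcl (1/100) (by norm_num)
    -- choose N and j
    set N : ℕ := max 12 L with hN
    have hN12 : 12 ≤ N := le_max_left _ _
    have hLN : L ≤ N := le_max_right _ _
    set j : ℕ := (N + 1) / 12 + 1 with hj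
    have hjlow : ((N:ℝ) + 1) / 12 ≤ (j:ℝ) := by
      have h12 : N + 1 ≤ 12 * j := by omega
      have : ((N:ℝ) + 1) ≤ 12 * (j:ℝ) := by exact_mod_cast h12
      linarith
    have hjhigh : (j:ℝ) ≤ ((N:ℝ) + 1) / 4 := by
      have h4 : 4 * j ≤ N + 1 := by omega
      have : 4 * (j:ℝ) ≤ ((N:ℝ) + 1) := by exact_mod_cast h4
      linarith
    have hπ := Real.pi_pos
    -- the special point x = 2π N! j
    set x : ℝ := 2 * Real.pi * (Nat.factorial N : ℝ) * (j : ℝ) with hx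
    set z : ℂ := (x : ℂ) with hz
    have hzre : z.re = x := by simp [hz]
    have hzim : z.im = 0 := by simp [hz]
    -- all terms nonneg, term N at least 1/2
    have hNfacpos : (0:ℝ) < (Nat.factorial N : ℝ) := by exact_mod_cast Nat.factorial_pos N
    have hargN : x / (Nat.factorial (N+1) : ℝ) = 2 * Real.pi * (j:ℝ) / ((N:ℝ) + 1) := by
      rw [hx, Nat.factorial_succ]
      push_cast
      field_simp
    have hargN_mem : Real.pi / 6 ≤ x / (Nat.factorial (N+1) : ℝ)
        ∧ x / (Nat.factorial (N+1) : ℝ) ≤ Real.pi / 2 := by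
      rw [hargN]
      constructor
      · rw [div_le_div_iff₀ (by norm_num) (by positivity)]
        nlinarith
      · rw [div_le_div_iff₀ (by positivity) (by norm_num)]
        nlinarith
    have hterm_nonneg : ∀ k : ℕ, 0 ≤ sinTerm (k + 1) z := by
      intro k
      rw [sinTerm, hzre, hzim]
      rcases le_or_gt (k + 1) N with hk | hk
      · -- argument is a multiple of 2π
        obtain ⟨m, hm⟩ := Nat.factorial_dvd_factorial hk
        have hfac : (0:ℝ) < (Nat.factorial (k+1) : ℝ) := by
          exact_mod_cast Nat.factorial_pos (k+1)
        have : x / (Nat.factorial (k+1) : ℝ) = ((2 * m * j : ℕ) : ℝ) * Real.pi := by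
          have hmr : (Nat.factorial N : ℝ) = (Nat.factorial (k+1) : ℝ) * (m : ℝ) := by
            exact_mod_cast congrArg (fun n : ℕ => (n : ℝ)) hm
          rw [hx, hmr]
          push_cast
          field_simp
        rw [this, Real.sin_nat_mul_pi, zero_mul]
      · -- positive small argument
        have hk' : N + 1 ≤ k + 1 := hk
        have hfacle : (Nat.factorial (N+1) : ℝ) ≤ (Nat.factorial (k+1) : ℝ) := by
          exact_mod_cast Nat.factorial_le hk'
        have hfacpos : (0:ℝ) < (Nat.factorial (N+1) : ℝ) := by
          exact_mod_cast Nat.factorial_pos (N+1)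
        have hxpos : 0 ≤ x := by positivity
        have harg_le : x / (Nat.factorial (k+1) : ℝ) ≤ x / (Nat.factorial (N+1) : ℝ) :=
          div_le_div_of_nonneg_left hxpos hfacpos hfacle
        apply mul_nonneg _ (Real.exp_pos _).le
        apply Real.sin_nonneg_of_nonneg_of_le_pi
        · positivity
        · refine harg_le.trans (hargN_mem.2.trans ?_)
          linarith
    have htermN : (1:ℝ)/2 ≤ sinTerm (N + 1) z := by
      rw [sinTerm, hzre, hzim]
      have : Real.exp (-(0:ℝ) ^ 2 / ((Nat.factorial (N+1) : ℝ)) ^ 2) = 1 := by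
        norm_num
      rw [this, mul_one]
      have := Real.sin_le_sin_of_le_of_le_pi_div_two
        (x := Real.pi / 6) (y := x / (Nat.factorial (N+1) : ℝ))
        (by linarith) hargN_mem.2 hargN_mem.1
      rw [Real.sin_pi_div_six] at this
      linarith
    have htsum : (1:ℝ)/2 ≤ ∑' k : ℕ, sinTerm (k + 1) z := by
      refine htermN.trans ?_
      exact Summable.le_tsum (summable_sinTerm z) N (fun k _ => hterm_nonneg k)
    -- h z = h 0
    have hz_eq : z = (0:ℂ) + (((Nat.factorial N / L * j : ℕ) : ℝ)
        • ((2 * Real.pi * (L : ℝ) : ℝ) : ℂ)) := by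
      obtain ⟨m, hm⟩ := Nat.dvd_factorial hL hLN
      have hmL : Nat.factorial N / L = m := by
        rw [hm]; exact Nat.mul_div_cancel_left m hL
      rw [hmL, hz, hx]
      have : (Nat.factorial N : ℝ) = (L : ℝ) * (m : ℝ) := by exact_mod_cast hm
      push_cast [this]
      simp only [Complex.real_smul]
      push_cast
      ring
    have hper_iter : ∀ K : ℕ, h ((0:ℂ) + ((K : ℝ) • ((2 * Real.pi * (L : ℝ) : ℝ) : ℂ))) = h 0 := by
      intro K
      induction K with
      | zero => simp
      | succ n ih =>
        have : (0:ℂ) + (((n+1 : ℕ) : ℝ) • ((2 * Real.pi * (L : ℝ) : ℝ) : ℂ))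
            = ((0:ℂ) + ((n : ℝ) • ((2 * Real.pi * (L : ℝ) : ℝ) : ℂ)))
              + ((2 * Real.pi * (L : ℝ) : ℝ) : ℂ) := by
          simp only [Complex.real_smul]
          push_cast
          ring
        rw [this, hper, ih]
    have hhz : h z = h 0 := by rw [hz_eq, hper_iter]
    -- contradiction
    have h1 := hap z
    have h2 := hap 0
    have hw0 : wfun 0 - 0 = 0 := by
      rw [wfun]
      have : ∀ k : ℕ, sinTerm (k + 1) (0:ℂ) = 0 := by
        intro k
        rw [sinTerm]
        simp
      rw [tsum_congr this]
      simp
    rw [hw0] at h2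
    have hwz : wfun z - z = (((2 * Real.exp 1)⁻¹ * ∑' k : ℕ, sinTerm (k + 1) z : ℝ) : ℂ) := by
      rw [wfun]; ring
    have habs : (2 * Real.exp 1)⁻¹ * (1/2) ≤ ‖wfun z - z‖ := by
      rw [hwz, Complex.norm_real, Real.norm_eq_abs]
      have hpos : (0:ℝ) < (2 * Real.exp 1)⁻¹ := by positivity
      have : (2 * Real.exp 1)⁻¹ * (1/2) ≤ (2 * Real.exp 1)⁻¹ * ∑' k : ℕ, sinTerm (k + 1) z := by
        apply mul_le_mul_of_nonneg_left htsum hpos.le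
      refine this.trans (le_abs_self _)
    have he3 : Real.exp 1 < 3 := by
      have := Real.exp_one_lt_d9
      linarith
    have hq : (1:ℝ)/12 < (2 * Real.exp 1)⁻¹ * (1/2) := by
      have hepos := Real.exp_pos 1
      have heq : (2 * Real.exp 1)⁻¹ * (1/2) = 1 / (4 * Real.exp 1) := by
        field_simp
        ring
      rw [heq, lt_div_iff₀ (by positivity)]
      nlinarith
    have hfinal : ‖wfun z - z‖
        ≤ ‖(wfun z - z) - h 0‖ + ‖h 0 - 0‖ := by
      calc ‖wfun z - z‖ = ‖((wfun z - z) - h 0) + (h 0 - 0)‖ := by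
            congr 1
            ring
        _ ≤ ‖(wfun z - z) - h 0‖ + ‖h 0 - 0‖ := norm_add_le _ _
    have h2' : ‖h 0 - 0‖ ≤ 1/100 := by
      rw [norm_sub_rev] at h2
      exact h2
    rw [hhz] at h1
    linarith
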